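/- Let X̂ : ℂ → ℝ⁸ be given by X̂ = ( i(z−z̄)(1 + r⁶/9), −(z+z̄)(1 + r⁶/9), i(z̄−z)(r²/2 + 2r⁴/3), (z̄+z)(r²/2 + 2r⁴/3), i(z²−z̄²)(1 − r⁴/12), −(z²+z̄²)(1 − r⁴/12), 1 − r² − 3r⁴/4 + 4r⁶/9 − r⁸/36, 1 + r² + 5r⁴/4 + 4r⁶/9 + r⁸/36 ), r² = |z|². Then ⟨X̂, X̂⟩ = 0 for the Lorentz form ⟨Y,Y⟩ = Σᵢ₌₁⁷ Yᵢ² − Y₈², and (1/2)⟨X̂_z, X̂_z̄⟩ = 1 + 4r² + r⁴/4 + 2r⁶/9 + 4r⁸/9 + r¹⁰/36 + r¹²/81 > 0 for all z. -/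

import Mathlib

open Finset Complex

/-- The ℂ-bilinear Lorentz form on ℂ⁸ (signature (7,1), last coordinate
timelike). -/
noncomputable def lor8 (a b : Fin 8 → ℂ) : ℂ :=
  (∑ i, a i * b i) - 2 * a 7 * b 7

/-- The Wirtinger derivative ∂/∂z. -/
noncomputable def wderivZ {E : Type*} [NormedAddCommGroup E] [NormedSpace ℂ E]
    (f : ℂ → E) (z : ℂ) : E :=
  (2 : ℂ)⁻¹ • (fderiv ℝ f z 1 - Complex.I • fderiv ℝ f z Complex.I)

/-- The Wirtinger derivative ∂/∂z̄. -/
noncomputable def wderivZbar {E : Type*} [NormedAddCommGroup E] [NormedSpace ℂ E]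
    (f : ℂ → E) (z : ℂ) : E :=
  (2 : ℂ)⁻¹ • (fderiv ℝ f z 1 + Complex.I • fderiv ℝ f z Complex.I)

/-- The lift X̂ of (8.4): the lift of the Willmore surface x̂ of Example 1. -/
noncomputable def Xhat (z : ℂ) : Fin 8 → ℂ :=
  ![ I * (z - (starRingEnd ℂ) z) * (1 + (normSq z : ℂ) ^ 3 / 9),
     -(z + (starRingEnd ℂ) z) * (1 + (normSq z : ℂ) ^ 3 / 9),
     I * ((starRingEnd ℂ) z - z) * ((normSq z : ℂ) / 2 + 2 * (normSq z : ℂ) ^ 2 / 3),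
     ((starRingEnd ℂ) z + z) * ((normSq z : ℂ) / 2 + 2 * (normSq z : ℂ) ^ 2 / 3),
     I * (z ^ 2 - (starRingEnd ℂ z) ^ 2) * (1 - (normSq z : ℂ) ^ 2 / 12),
     -(z ^ 2 + (starRingEnd ℂ z) ^ 2) * (1 - (normSq z : ℂ) ^ 2 / 12),
     1 - (normSq z : ℂ) - 3 * (normSq z : ℂ) ^ 2 / 4 + 4 * (normSq z : ℂ) ^ 3 / 9
       - (normSq z : ℂ) ^ 4 / 36,
     1 + (normSq z : ℂ) + 5 * (normSq z : ℂ) ^ 2 / 4 + 4 * (normSq z : ℂ) ^ 3 / 9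
       + (normSq z : ℂ) ^ 4 / 36 ]

/-- An ℝ-linear map ℂ → ℂ of the form `h ↦ p h + q h̄`. -/
noncomputable def lin (p q : ℂ) : ℂ →L[ℝ] ℂ :=
  p • (ContinuousLinearMap.id ℝ ℂ) + q • (Complex.conjCLE : ℂ ≃L[ℝ] ℂ).toContinuousLinearMap

@[simp] lemma lin_apply (p q h : ℂ) : lin p q h = p * h + q * (starRingEnd ℂ) h := by
  simp [lin]

lemma Hconst (c z : ℂ) : HasFDerivAt (fun _ : ℂ => c) (lin 0 0) z := by
  have := hasFDerivAt_const (𝕜 := ℝ) c z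
  convert this using 1; ext h; simp

lemma Hid (z : ℂ) : HasFDerivAt (fun w : ℂ => w) (lin 1 0) z := by
  have := (ContinuousLinearMap.id ℝ ℂ).hasFDerivAt (x := z)
  refine this.congr_fderiv ?_; ext h; simp

lemma Hconj (z : ℂ) : HasFDerivAt (fun w : ℂ => (starRingEnd ℂ) w) (lin 0 1) z := by
  have := (Complex.conjCLE : ℂ ≃L[ℝ] ℂ).toContinuousLinearMap.hasFDerivAt (x := z)
  refine this.congr_fderiv ?_; ext h; simp

lemma Hadd {f g : ℂ → ℂ} {p q p' q' z : ℂ} (hf : HasFDerivAt f (lin p q) z)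
    (hg : HasFDerivAt g (lin p' q') z) :
    HasFDerivAt (fun w => f w + g w) (lin (p + p') (q + q')) z := by
  have := hf.add hg
  refine this.congr_fderiv ?_; ext h; simp; ring

lemma Hsub {f g : ℂ → ℂ} {p q p' q' z : ℂ} (hf : HasFDerivAt f (lin p q) z)
    (hg : HasFDerivAt g (lin p' q') z) :
    HasFDerivAt (fun w => f w - g w) (lin (p - p') (q - q')) z := by
  have := hf.sub hg
  refine this.congr_fderiv ?_; ext h; simp; ring

lemma Hneg {f : ℂ → ℂ} {p q z : ℂ} (hf : HasFDerivAt f (lin p q) z) :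
    HasFDerivAt (fun w => -(f w)) (lin (-p) (-q)) z := by
  have := hf.neg
  refine this.congr_fderiv ?_; ext h; simp; ring

lemma Hmul {f g : ℂ → ℂ} {p q p' q' z : ℂ} (hf : HasFDerivAt f (lin p q) z)
    (hg : HasFDerivAt g (lin p' q') z) :
    HasFDerivAt (fun w => f w * g w) (lin (f z * p' + g z * p) (f z * q' + g z * q)) z := by
  have := hf.mul hg
  refine this.congr_fderiv ?_; ext h; simp; ring

lemma Hpow {f : ℂ → ℂ} {p q z : ℂ} (hf : HasFDerivAt f (lin p q) z) (k : ℕ) :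
    HasFDerivAt (fun w => f w ^ k) (lin (k * f z ^ (k - 1) * p) (k * f z ^ (k - 1) * q)) z := by
  have h1 : HasFDerivAt (fun y : ℂ => y ^ k)
      (((1 : ℂ →L[ℂ] ℂ).smulRight ((k : ℂ) * f z ^ (k - 1))).restrictScalars ℝ) (f z) :=
    ((hasDerivAt_pow k (f z)).hasFDerivAt).restrictScalars ℝ
  have := h1.comp z hf
  refine this.congr_fderiv ?_; ext h; simp; ring

lemma Hdivc {f : ℂ → ℂ} {p q z : ℂ} (hf : HasFDerivAt f (lin p q) z) (c : ℂ) :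
    HasFDerivAt (fun w => f w / c) (lin (p / c) (q / c)) z := by
  simp only [div_eq_mul_inv]
  have := Hmul hf (Hconst c⁻¹ z)
  convert this using 1; ext h; simp; ring

lemma wderivZ_eq {f : ℂ → ℂ} {p q z : ℂ} (h : HasFDerivAt f (lin p q) z) :
    wderivZ f z = p ∧ wderivZbar f z = q := by
  unfold wderivZ wderivZbar
  rw [h.fderiv]
  constructor <;> · simp [lin_apply, Complex.ext_iff]; ring_nf; simp [Complex.ext_iff]

lemma wderivZ_pi_apply {f : ℂ → Fin 8 → ℂ} {z : ℂ} (hf : DifferentiableAt ℝ f z) (i : Fin 8) :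
    wderivZ f z i = wderivZ (fun w => f w i) z ∧
    wderivZbar f z i = wderivZbar (fun w => f w i) z := by
  have h : HasFDerivAt (fun w => f w i)
      ((ContinuousLinearMap.proj (R := ℝ) (φ := fun _ : Fin 8 => ℂ) i).comp (fderiv ℝ f z)) z :=
    (ContinuousLinearMap.proj (R := ℝ) (φ := fun _ : Fin 8 => ℂ) i).hasFDerivAt.comp z
      hf.hasFDerivAt
  constructor <;> simp [wderivZ, wderivZbar, h.fderiv]

set_option maxHeartbeats 1600000

/-- X̂ is light-like, and (1/2)⟨X̂_z, X̂_z̄⟩ equals the stated positive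
polynomial in r² = |z|². -/
theorem stmt_18 : ∀ z : ℂ,
    lor8 (Xhat z) (Xhat z) = 0 ∧
    (1 / 2) * lor8 (wderivZ Xhat z) (wderivZbar Xhat z)
      = 1 + 4 * (normSq z : ℂ) + (normSq z : ℂ) ^ 2 / 4 + 2 * (normSq z : ℂ) ^ 3 / 9
        + 4 * (normSq z : ℂ) ^ 4 / 9 + (normSq z : ℂ) ^ 5 / 36
        + (normSq z : ℂ) ^ 6 / 81 ∧
    (0 : ℝ) < 1 + 4 * normSq z + (normSq z) ^ 2 / 4 + 2 * (normSq z) ^ 3 / 9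
        + 4 * (normSq z) ^ 4 / 9 + (normSq z) ^ 5 / 36 + (normSq z) ^ 6 / 81 := by
  intro z
  have hn := Hmul (Hid z) (Hconj z)
  have e0 : (fun w => Xhat w 0) = (fun w : ℂ => I * (w - (starRingEnd ℂ) w) * (1 + (w * (starRingEnd ℂ) w) ^ 3 / 9)) := by
    funext w; rw [Complex.mul_conj]; rfl
  have h0 := e0.symm ▸ (Hmul (Hmul (Hconst I z) (Hsub (Hid z) (Hconj z))) (Hadd (Hconst 1 z) (Hdivc (Hpow hn 3) 9)))
  have e1 : (fun w => Xhat w 1) = (fun w : ℂ => -(w + (starRingEnd ℂ) w) * (1 + (w * (starRingEnd ℂ) w) ^ 3 / 9)) := by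
    funext w; rw [Complex.mul_conj]; rfl
  have h1 := e1.symm ▸ (Hmul (Hneg (Hadd (Hid z) (Hconj z))) (Hadd (Hconst 1 z) (Hdivc (Hpow hn 3) 9)))
  have e2 : (fun w => Xhat w 2) = (fun w : ℂ => I * ((starRingEnd ℂ) w - w) * (w * (starRingEnd ℂ) w / 2 + 2 * (w * (starRingEnd ℂ) w) ^ 2 / 3)) := by
    funext w; rw [Complex.mul_conj]; rfl
  have h2 := e2.symm ▸ (Hmul (Hmul (Hconst I z) (Hsub (Hconj z) (Hid z))) (Hadd (Hdivc hn 2) (Hdivc (Hmul (Hconst 2 z) (Hpow hn 2)) 3)))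
  have e3 : (fun w => Xhat w 3) = (fun w : ℂ => ((starRingEnd ℂ) w + w) * (w * (starRingEnd ℂ) w / 2 + 2 * (w * (starRingEnd ℂ) w) ^ 2 / 3)) := by
    funext w; rw [Complex.mul_conj]; rfl
  have h3 := e3.symm ▸ (Hmul (Hadd (Hconj z) (Hid z)) (Hadd (Hdivc hn 2) (Hdivc (Hmul (Hconst 2 z) (Hpow hn 2)) 3)))
  have e4 : (fun w => Xhat w 4) = (fun w : ℂ => I * (w ^ 2 - ((starRingEnd ℂ) w) ^ 2) * (1 - (w * (starRingEnd ℂ) w) ^ 2 / 12)) := by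
    funext w; rw [Complex.mul_conj]; rfl
  have h4 := e4.symm ▸ (Hmul (Hmul (Hconst I z) (Hsub (Hpow (Hid z) 2) (Hpow (Hconj z) 2))) (Hsub (Hconst 1 z) (Hdivc (Hpow hn 2) 12)))
  have e5 : (fun w => Xhat w 5) = (fun w : ℂ => -(w ^ 2 + ((starRingEnd ℂ) w) ^ 2) * (1 - (w * (starRingEnd ℂ) w) ^ 2 / 12)) := by
    funext w; rw [Complex.mul_conj]; rfl
  have h5 := e5.symm ▸ (Hmul (Hneg (Hadd (Hpow (Hid z) 2) (Hpow (Hconj z) 2))) (Hsub (Hconst 1 z) (Hdivc (Hpow hn 2) 12)))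
  have e6 : (fun w => Xhat w 6) = (fun w : ℂ => 1 - w * (starRingEnd ℂ) w - 3 * (w * (starRingEnd ℂ) w) ^ 2 / 4 + 4 * (w * (starRingEnd ℂ) w) ^ 3 / 9 - (w * (starRingEnd ℂ) w) ^ 4 / 36) := by
    funext w; rw [Complex.mul_conj]; rfl
  have h6 := e6.symm ▸ (Hsub (Hadd (Hsub (Hsub (Hconst 1 z) hn) (Hdivc (Hmul (Hconst 3 z) (Hpow hn 2)) 4)) (Hdivc (Hmul (Hconst 4 z) (Hpow hn 3)) 9)) (Hdivc (Hpow hn 4) 36))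
  have e7 : (fun w => Xhat w 7) = (fun w : ℂ => 1 + w * (starRingEnd ℂ) w + 5 * (w * (starRingEnd ℂ) w) ^ 2 / 4 + 4 * (w * (starRingEnd ℂ) w) ^ 3 / 9 + (w * (starRingEnd ℂ) w) ^ 4 / 36) := by
    funext w; rw [Complex.mul_conj]; rfl
  have h7 := e7.symm ▸ (Hadd (Hadd (Hadd (Hadd (Hconst 1 z) hn) (Hdivc (Hmul (Hconst 5 z) (Hpow hn 2)) 4)) (Hdivc (Hmul (Hconst 4 z) (Hpow hn 3)) 9)) (Hdivc (Hpow hn 4) 36))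
  have E0 : Xhat z 0 = I * (z - (starRingEnd ℂ) z) * (1 + (z * (starRingEnd ℂ) z) ^ 3 / 9) := by
    rw [Complex.mul_conj]; rfl
  have E1 : Xhat z 1 = -(z + (starRingEnd ℂ) z) * (1 + (z * (starRingEnd ℂ) z) ^ 3 / 9) := by
    rw [Complex.mul_conj]; rfl
  have E2 : Xhat z 2 = I * ((starRingEnd ℂ) z - z) * (z * (starRingEnd ℂ) z / 2 + 2 * (z * (starRingEnd ℂ) z) ^ 2 / 3) := by
    rw [Complex.mul_conj]; rfl
  have E3 : Xhat z 3 = ((starRingEnd ℂ) z + z) * (z * (starRingEnd ℂ) z / 2 + 2 * (z * (starRingEnd ℂ) z) ^ 2 / 3) := by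
    rw [Complex.mul_conj]; rfl
  have E4 : Xhat z 4 = I * (z ^ 2 - ((starRingEnd ℂ) z) ^ 2) * (1 - (z * (starRingEnd ℂ) z) ^ 2 / 12) := by
    rw [Complex.mul_conj]; rfl
  have E5 : Xhat z 5 = -(z ^ 2 + ((starRingEnd ℂ) z) ^ 2) * (1 - (z * (starRingEnd ℂ) z) ^ 2 / 12) := by
    rw [Complex.mul_conj]; rfl
  have E6 : Xhat z 6 = 1 - z * (starRingEnd ℂ) z - 3 * (z * (starRingEnd ℂ) z) ^ 2 / 4 + 4 * (z * (starRingEnd ℂ) z) ^ 3 / 9 - (z * (starRingEnd ℂ) z) ^ 4 / 36 := by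
    rw [Complex.mul_conj]; rfl
  have E7 : Xhat z 7 = 1 + z * (starRingEnd ℂ) z + 5 * (z * (starRingEnd ℂ) z) ^ 2 / 4 + 4 * (z * (starRingEnd ℂ) z) ^ 3 / 9 + (z * (starRingEnd ℂ) z) ^ 4 / 36 := by
    rw [Complex.mul_conj]; rfl
  have hdiff : DifferentiableAt ℝ Xhat z := by
    rw [differentiableAt_pi]
    intro i
    fin_cases i
    exacts [h0.differentiableAt, h1.differentiableAt, h2.differentiableAt,
      h3.differentiableAt, h4.differentiableAt, h5.differentiableAt,
      h6.differentiableAt, h7.differentiableAt]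
  have W0 : wderivZ (fun w => Xhat w 0) z = I * (1 + 4 * z ^ 3 * ((starRingEnd ℂ) z) ^ 3 / 9 - z ^ 2 * ((starRingEnd ℂ) z) ^ 4 / 3) := by
    rw [(wderivZ_eq h0).1]; ring
  have Wb0 : wderivZbar (fun w => Xhat w 0) z = I * (z ^ 4 * ((starRingEnd ℂ) z) ^ 2 / 3 - 1 - 4 * z ^ 3 * ((starRingEnd ℂ) z) ^ 3 / 9) := by
    rw [(wderivZ_eq h0).2]; ring
  have W1 : wderivZ (fun w => Xhat w 1) z = -(1 + 4 * z ^ 3 * ((starRingEnd ℂ) z) ^ 3 / 9 + z ^ 2 * ((starRingEnd ℂ) z) ^ 4 / 3) := by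
    rw [(wderivZ_eq h1).1]; ring
  have Wb1 : wderivZbar (fun w => Xhat w 1) z = -(z ^ 4 * ((starRingEnd ℂ) z) ^ 2 / 3 + 1 + 4 * z ^ 3 * ((starRingEnd ℂ) z) ^ 3 / 9) := by
    rw [(wderivZ_eq h1).2]; ring
  have W2 : wderivZ (fun w => Xhat w 2) z = I * (((starRingEnd ℂ) z) ^ 2 / 2 + 4 * z * ((starRingEnd ℂ) z) ^ 3 / 3 - z * (starRingEnd ℂ) z - 2 * z ^ 2 * ((starRingEnd ℂ) z) ^ 2) := by
    rw [(wderivZ_eq h2).1]; ring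
  have Wb2 : wderivZbar (fun w => Xhat w 2) z = I * (z * (starRingEnd ℂ) z + 2 * z ^ 2 * ((starRingEnd ℂ) z) ^ 2 - z ^ 2 / 2 - 4 * z ^ 3 * (starRingEnd ℂ) z / 3) := by
    rw [(wderivZ_eq h2).2]; ring
  have W3 : wderivZ (fun w => Xhat w 3) z = ((starRingEnd ℂ) z) ^ 2 / 2 + 4 * z * ((starRingEnd ℂ) z) ^ 3 / 3 + z * (starRingEnd ℂ) z + 2 * z ^ 2 * ((starRingEnd ℂ) z) ^ 2 := by
    rw [(wderivZ_eq h3).1]; ring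
  have Wb3 : wderivZbar (fun w => Xhat w 3) z = z * (starRingEnd ℂ) z + 2 * z ^ 2 * ((starRingEnd ℂ) z) ^ 2 + z ^ 2 / 2 + 4 * z ^ 3 * (starRingEnd ℂ) z / 3 := by
    rw [(wderivZ_eq h3).2]; ring
  have W4 : wderivZ (fun w => Xhat w 4) z = I * (2 * z - z ^ 3 * ((starRingEnd ℂ) z) ^ 2 / 3 + z * ((starRingEnd ℂ) z) ^ 4 / 6) := by
    rw [(wderivZ_eq h4).1]; ring
  have Wb4 : wderivZbar (fun w => Xhat w 4) z = I * (-(z ^ 4 * (starRingEnd ℂ) z) / 6 - 2 * (starRingEnd ℂ) z + z ^ 2 * ((starRingEnd ℂ) z) ^ 3 / 3) := by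
    rw [(wderivZ_eq h4).2]; ring
  have W5 : wderivZ (fun w => Xhat w 5) z = -2 * z + z ^ 3 * ((starRingEnd ℂ) z) ^ 2 / 3 + z * ((starRingEnd ℂ) z) ^ 4 / 6 := by
    rw [(wderivZ_eq h5).1]; ring
  have Wb5 : wderivZbar (fun w => Xhat w 5) z = z ^ 4 * (starRingEnd ℂ) z / 6 - 2 * (starRingEnd ℂ) z + z ^ 2 * ((starRingEnd ℂ) z) ^ 3 / 3 := by
    rw [(wderivZ_eq h5).2]; ring
  have W6 : wderivZ (fun w => Xhat w 6) z = -((starRingEnd ℂ) z) - 3 * z * ((starRingEnd ℂ) z) ^ 2 / 2 + 4 * z ^ 2 * ((starRingEnd ℂ) z) ^ 3 / 3 - z ^ 3 * ((starRingEnd ℂ) z) ^ 4 / 9 := by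
    rw [(wderivZ_eq h6).1]; ring
  have Wb6 : wderivZbar (fun w => Xhat w 6) z = -z - 3 * z ^ 2 * (starRingEnd ℂ) z / 2 + 4 * z ^ 3 * ((starRingEnd ℂ) z) ^ 2 / 3 - z ^ 4 * ((starRingEnd ℂ) z) ^ 3 / 9 := by
    rw [(wderivZ_eq h6).2]; ring
  have W7 : wderivZ (fun w => Xhat w 7) z = (starRingEnd ℂ) z + 5 * z * ((starRingEnd ℂ) z) ^ 2 / 2 + 4 * z ^ 2 * ((starRingEnd ℂ) z) ^ 3 / 3 + z ^ 3 * ((starRingEnd ℂ) z) ^ 4 / 9 := by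
    rw [(wderivZ_eq h7).1]; ring
  have Wb7 : wderivZbar (fun w => Xhat w 7) z = z + 5 * z ^ 2 * (starRingEnd ℂ) z / 2 + 4 * z ^ 3 * ((starRingEnd ℂ) z) ^ 2 / 3 + z ^ 4 * ((starRingEnd ℂ) z) ^ 3 / 9 := by
    rw [(wderivZ_eq h7).2]; ring
  refine ⟨?_, ?_, ?_⟩
  · simp only [lor8, Fin.sum_univ_eight, E0, E1, E2, E3, E4, E5, E6, E7]
    ring_nf
    simp only [Complex.I_sq]
    ring
  · simp only [lor8, Fin.sum_univ_eight,
      (wderivZ_pi_apply hdiff 0).1, (wderivZ_pi_apply hdiff 0).2,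
      (wderivZ_pi_apply hdiff 1).1, (wderivZ_pi_apply hdiff 1).2,
      (wderivZ_pi_apply hdiff 2).1, (wderivZ_pi_apply hdiff 2).2,
      (wderivZ_pi_apply hdiff 3).1, (wderivZ_pi_apply hdiff 3).2,
      (wderivZ_pi_apply hdiff 4).1, (wderivZ_pi_apply hdiff 4).2,
      (wderivZ_pi_apply hdiff 5).1, (wderivZ_pi_apply hdiff 5).2,
      (wderivZ_pi_apply hdiff 6).1, (wderivZ_pi_apply hdiff 6).2,
      (wderivZ_pi_apply hdiff 7).1, (wderivZ_pi_apply hdiff 7).2,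
      W0, W1, W2, W3, W4, W5, W6, W7, Wb0, Wb1, Wb2, Wb3, Wb4, Wb5, Wb6, Wb7]
    rw [← Complex.mul_conj]
    ring_nf
    simp only [Complex.I_sq]
    ring
  · nlinarith [normSq_nonneg z, pow_nonneg (normSq_nonneg z) 2,
      pow_nonneg (normSq_nonneg z) 3, pow_nonneg (normSq_nonneg z) 4,
      pow_nonneg (normSq_nonneg z) 5, pow_nonneg (normSq_nonneg z) 6]
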